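/- Let U ⊆ E be an open set that is simply connected (in particular path-connected) as a topological subspace, and let F : E → E be continuously differentiable on U with symmetric Jacobian at every point of U, i.e. ⟨DF(x)u, v⟩ = ⟨DF(x)v, u⟩ for all x ∈ U and u, v ∈ E. Then there exists a differentiable function φ : U → ℝ with ∇φ(x) = F(x) for all x ∈ U, and φ is unique up to an additive constant: any two such potentials differ by a constant on U. -/

import Mathlib

open RealInnerProductSpace Set Metric Finset

set_option maxHeartbeats 1000000
set_option synthInstance.maxHeartbeats 1000000

noncomputable section PoincareAux

variable {E : Type*} [NormedAddCommGroup E] [InnerProductSpace ℝ E] [CompleteSpace E]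

/-- Two potentials of `F` on a convex set have equal differences. -/
theorem pot_diff_eq {F : E → E} {s : Set E} (hs : Convex ℝ s) {ψ χ : E → ℝ}
    (hψ : ∀ x ∈ s, HasGradientAt ψ (F x) x) (hχ : ∀ x ∈ s, HasGradientAt χ (F x) x)
    {x y : E} (hx : x ∈ s) (hy : y ∈ s) : ψ x - ψ y = χ x - χ y := by
  have h0 : ∀ z ∈ s, HasFDerivWithinAt (fun w => ψ w - χ w) (0 : E →L[ℝ] ℝ) s z := by
    intro z hz
    have := ((hψ z hz).hasFDerivAt.sub (hχ z hz).hasFDerivAt)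
    rw [sub_self] at this
    exact this.hasFDerivWithinAt
  have := hs.norm_image_sub_le_of_norm_hasFDerivWithin_le (C := 0) (f' := fun _ => (0:E →L[ℝ] ℝ)) h0 (fun z _ => by simp) hy hx
  have h1 : ψ x - χ x = ψ y - χ y := by
    rw [← sub_eq_zero]
    simpa [norm_le_zero_iff, sub_sub_sub_comm] using this
  linarith

/-- partition data adapted to a curve. -/
def Adapted (F : E → E) (g : ℝ → E) (n : ℕ) (ψ : ℕ → E → ℝ) (V : ℕ → Set E) : Prop :=
  0 < n ∧ ∀ i < n, Convex ℝ (V i) ∧ (∀ x ∈ V i, HasGradientAt (ψ i) (F x) x) ∧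
    ∀ t ∈ Set.Icc ((i : ℝ)/n) (((i : ℝ)+1)/n), g t ∈ V i

def psum (g : ℝ → E) (n : ℕ) (ψ : ℕ → E → ℝ) : ℝ :=
  ∑ i ∈ Finset.range n, (ψ i (g (((i : ℝ)+1)/n)) - ψ i (g ((i : ℝ)/n)))

theorem sum_range_mul' {M : Type*} [AddCommMonoid M] (f : ℕ → M) (n m : ℕ) :
    ∑ j ∈ range (n*m), f j = ∑ i ∈ range n, ∑ k ∈ range m, f (i*m + k) := by
  induction n with
  | zero => simp
  | succ n ih =>
      rw [Nat.succ_mul, Finset.sum_range_add, ih, Finset.sum_range_succ]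

theorem psum_refine {F : E → E} {g : ℝ → E} {n : ℕ} {ψ : ℕ → E → ℝ} {V : ℕ → Set E}
    (m : ℕ) (hm : 0 < m) (h : Adapted F g n ψ V) :
    psum g (n*m) (fun j => ψ (j / m)) = psum g n ψ ∧
      Adapted F g (n*m) (fun j => ψ (j / m)) (fun j => V (j / m)) := by
  obtain ⟨hn, hA⟩ := h
  have hnm : (0:ℝ) < (n:ℝ) * m := by positivity
  have hn0 : (0:ℝ) < n := by positivity
  have hm0 : (0:ℝ) < m := by positivity
  constructor
  · unfold psum
    rw [sum_range_mul']
    refine Finset.sum_congr rfl fun i hi => ?_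
    have hdiv : ∀ k, k < m → (i*m + k) / m = i := fun k hk => by
      rw [mul_comm, Nat.mul_add_div hm, Nat.div_eq_of_lt hk, add_zero]
    have : ∀ k ∈ Finset.range m,
        (fun j => ψ (j / m)) (i*m+k) (g ((↑(i*m+k)+1)/(↑(n*m)))) -
          (fun j => ψ (j / m)) (i*m+k) (g (↑(i*m+k)/↑(n*m)))
        = (fun k : ℕ => ψ i (g (((i:ℝ)*m + k)/((n:ℝ)*m)))) (k+1)
          - (fun k : ℕ => ψ i (g (((i:ℝ)*m + k)/((n:ℝ)*m)))) k := by
      intro k hk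
      simp only [hdiv k (Finset.mem_range.mp hk)]
      push_cast
      ring_nf
    rw [Finset.sum_congr rfl this, Finset.sum_range_sub
      (f := fun k : ℕ => ψ i (g (((i:ℝ)*m + k)/((n:ℝ)*m))))]
    have e1 : ((i:ℝ)*m + m)/((n:ℝ)*m) = ((i:ℝ)+1)/n := by field_simp
    have e2 : ((i:ℝ)*m + 0)/((n:ℝ)*m) = (i:ℝ)/n := by field_simp; ring
    have e2' : (i:ℝ)*m/((n:ℝ)*m) = (i:ℝ)/n := by field_simp
    rw [e1]
    norm_num [e2']
  · refine ⟨Nat.mul_pos hn hm, fun j hj => ?_⟩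
    have hi : j / m < n := Nat.div_lt_iff_lt_mul hm |>.mpr hj
    obtain ⟨hc, hp, hmem⟩ := hA (j/m) hi
    refine ⟨hc, hp, fun t ht => ?_⟩
    have h1 : (j/m) * m ≤ j := Nat.div_mul_le_self j m
    have h2 : j < ((j/m) + 1) * m := by
      simpa [Nat.mul_comm] using Nat.lt_mul_div_succ j hm
    refine hmem t ⟨le_trans ?_ ht.1, le_trans ht.2 ?_⟩
    · rw [div_le_div_iff₀ hn0 (by positivity)]
      have := (Nat.cast_le (α := ℝ)).mpr h1
      push_cast at this ⊢
      nlinarith [this, hm0]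
    · rw [div_le_div_iff₀ (by positivity) hn0]
      have := (Nat.cast_le (α := ℝ)).mpr (Nat.succ_le_of_lt h2)
      push_cast at this ⊢
      nlinarith [this, hn0]

theorem Adapted.mem_left {F : E → E} {g : ℝ → E} {n : ℕ} {ψ : ℕ → E → ℝ} {V : ℕ → Set E}
    (h : Adapted F g n ψ V) {i : ℕ} (hi : i < n) : g ((i:ℝ)/n) ∈ V i := by
  refine (h.2 i hi).2.2 _ ⟨le_refl _, ?_⟩
  have : (0:ℝ) < n := by exact_mod_cast h.1
  gcongr
  · linarith

theorem Adapted.mem_right {F : E → E} {g : ℝ → E} {n : ℕ} {ψ : ℕ → E → ℝ} {V : ℕ → Set E}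
    (h : Adapted F g n ψ V) {i : ℕ} (hi : i < n) : g (((i:ℝ)+1)/n) ∈ V i := by
  refine (h.2 i hi).2.2 _ ⟨?_, le_refl _⟩
  have : (0:ℝ) < n := by exact_mod_cast h.1
  gcongr
  · linarith

theorem psum_eq_same {F : E → E} {g : ℝ → E} {n : ℕ} {ψ χ : ℕ → E → ℝ} {V W : ℕ → Set E}
    (hψ : Adapted F g n ψ V) (hχ : Adapted F g n χ W) : psum g n ψ = psum g n χ := by
  refine Finset.sum_congr rfl fun i hi => ?_
  have hi' := Finset.mem_range.mp hi
  exact pot_diff_eq ((hψ.2 i hi').1.inter (hχ.2 i hi').1)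
    (fun x hx => (hψ.2 i hi').2.1 x hx.1) (fun x hx => (hχ.2 i hi').2.1 x hx.2)
    ⟨hψ.mem_right hi', hχ.mem_right hi'⟩ ⟨hψ.mem_left hi', hχ.mem_left hi'⟩

/-- value of psum independent of adapted data. -/
theorem psum_welldef {F : E → E} {g : ℝ → E} {n m : ℕ} {ψ χ : ℕ → E → ℝ} {V W : ℕ → Set E}
    (hψ : Adapted F g n ψ V) (hχ : Adapted F g m χ W) : psum g n ψ = psum g m χ := by
  obtain ⟨e1, hA1⟩ := psum_refine m hχ.1 hψ
  obtain ⟨e2, hA2⟩ := psum_refine n hψ.1 hχ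
  rw [Nat.mul_comm] at e2 hA2
  rw [← e1, ← e2]
  exact psum_eq_same hA1 hA2

open Classical in
/-- The "path integral" of `F` along `g`. -/
noncomputable def pint (F : E → E) (g : ℝ → E) : ℝ :=
  if h : ∃ p : ℕ × (ℕ → E → ℝ) × (ℕ → Set E), Adapted F g p.1 p.2.1 p.2.2 then
    psum g h.choose.1 h.choose.2.1 else 0

theorem pint_eq {F : E → E} {g : ℝ → E} {n : ℕ} {ψ : ℕ → E → ℝ} {V : ℕ → Set E}
    (h : Adapted F g n ψ V) : pint F g = psum g n ψ := by
  classical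
  have hex : ∃ p : ℕ × (ℕ → E → ℝ) × (ℕ → Set E), Adapted F g p.1 p.2.1 p.2.2 := ⟨⟨n, ψ, V⟩, h⟩
  rw [pint, dif_pos hex]
  exact psum_welldef hex.choose_spec h

/-- Local potential on a ball via the radial integral formula. -/
theorem exists_potential_ball [ProperSpace E] {F : E → E} {U : Set E} (hU : IsOpen U)
    (hF : ContDiffOn ℝ 1 F U)
    (hsymm : ∀ x ∈ U, ∀ u v : E, ⟪fderiv ℝ F x u, v⟫ = ⟪fderiv ℝ F x v, u⟫)
    {c : E} {r : ℝ} (hball : ball c r ⊆ U) :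
    ∃ ψ : E → ℝ, ∀ x ∈ ball c r, HasGradientAt ψ (F x) x := by
  have hFd : DifferentiableOn ℝ F U := hF.differentiableOn one_ne_zero
  have hfc : ContinuousOn (fderiv ℝ F) U := hF.continuousOn_fderiv_of_isOpen hU le_rfl
  set z : E → ℝ → E := fun y t => c + t • (y - c) with hzdef
  refine ⟨fun y => ∫ t in (0:ℝ)..1, ⟪F (z y t), y - c⟫, fun x hx => ?_⟩
  have hxc : dist x c < r := mem_ball.mp hx
  set ε : ℝ := (r - dist x c)/2 with hεdef
  have hε0 : 0 < ε := by simp only [hεdef]; linarith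
  have hIsub : Set.uIoc (0:ℝ) 1 ⊆ Set.Icc (0:ℝ) 1 := by
    rw [Set.uIoc_of_le zero_le_one]; exact Set.Ioc_subset_Icc_self
  have hzball : ∀ y ∈ closedBall x ε, ∀ t ∈ Set.Icc (0:ℝ) 1, z y t ∈ ball c r := by
    intro y hy t ht
    have hyx : dist y x ≤ ε := mem_closedBall.mp hy
    have h1 : ‖y - c‖ ≤ ε + dist x c := by
      have := dist_triangle y x c
      rw [← dist_eq_norm]; linarith
    have h2 : ‖z y t - c‖ = |t| * ‖y - c‖ := by
      simp [hzdef, norm_smul]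
    rw [mem_ball, dist_eq_norm, h2, abs_of_nonneg ht.1]
    have h3 : t * ‖y - c‖ ≤ ‖y - c‖ := by
      nlinarith [norm_nonneg (y - c), ht.1, ht.2]
    have : ε + dist x c < r := by simp only [hεdef]; linarith
    calc t * ‖y - c‖ ≤ ‖y - c‖ := h3
      _ ≤ ε + dist x c := h1
      _ < r := this
  have hzU : ∀ y ∈ closedBall x ε, ∀ t ∈ Set.Icc (0:ℝ) 1, z y t ∈ U :=
    fun y hy t ht => hball (hzball y hy t ht)
  have hzcont : Continuous fun p : ℝ × E => z p.2 p.1 := by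
    simp only [hzdef]; fun_prop
  -- compact set of relevant points and bounds
  set K : Set E := (fun p : ℝ × E => z p.2 p.1) '' (Set.Icc (0:ℝ) 1 ×ˢ closedBall x ε) with hKdef
  have hKcomp : IsCompact K :=
    (isCompact_Icc.prod (isCompact_closedBall x ε)).image hzcont
  have hKU : K ⊆ U := by
    rintro _ ⟨⟨t, y⟩, ⟨ht, hy⟩, rfl⟩
    exact hzU y hy t ht
  have hKmem : ∀ y ∈ closedBall x ε, ∀ t ∈ Set.Icc (0:ℝ) 1, z y t ∈ K :=
    fun y hy t ht => ⟨(t, y), ⟨ht, hy⟩, rfl⟩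
  obtain ⟨M₁, hM₁⟩ := hKcomp.exists_bound_of_continuousOn (hfc.mono hKU)
  obtain ⟨M₂, hM₂⟩ := hKcomp.exists_bound_of_continuousOn (hF.continuousOn.mono hKU)
  have hM₁0 : 0 ≤ M₁ := le_trans (norm_nonneg _) (hM₁ _ (hKmem x (mem_closedBall_self hε0.le) 0 ⟨le_refl _, zero_le_one⟩))
  have hr0 : 0 ≤ r := le_trans dist_nonneg hxc.le
  -- the derivative candidate
  set F' : E → ℝ → E →L[ℝ] ℝ := fun y t =>
    t • ((innerSL ℝ (y - c)).comp (fderiv ℝ F (z y t))) + innerSL ℝ (F (z y t)) with hF'def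
  have hzy : ∀ (t : ℝ) (y : E), HasFDerivAt (fun w => z w t)
      (t • ContinuousLinearMap.id ℝ E) y := by
    intro t y
    have h1 : HasFDerivAt (fun w : E => w - c) (ContinuousLinearMap.id ℝ E) y :=
      (hasFDerivAt_id y).sub_const c
    simpa [hzdef] using (h1.const_smul t).const_add c
  have hdiff : ∀ t ∈ Set.Icc (0:ℝ) 1, ∀ y ∈ closedBall x ε,
      HasFDerivAt (fun w => ⟪F (z w t), w - c⟫) (F' y t) y := by
    intro t ht y hy
    have hzUy : z y t ∈ U := hzU y hy t ht
    have hFz : HasFDerivAt F (fderiv ℝ F (z y t)) (z y t) :=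
      (hFd.differentiableAt (hU.mem_nhds hzUy)).hasFDerivAt
    have hcomp : HasFDerivAt (fun w => F (z w t))
        ((fderiv ℝ F (z y t)).comp (t • ContinuousLinearMap.id ℝ E)) y :=
      hFz.comp y (hzy t y)
    have hsub : HasFDerivAt (fun w : E => w - c) (ContinuousLinearMap.id ℝ E) y :=
      (hasFDerivAt_id y).sub_const c
    have := hcomp.inner ℝ hsub
    refine this.congr_fderiv ?_
    ext v
    simp only [hF'def, ContinuousLinearMap.comp_apply, fderivInnerCLM_apply,
      ContinuousLinearMap.prod_apply, ContinuousLinearMap.add_apply,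
      ContinuousLinearMap.smul_apply, ContinuousLinearMap.coe_id', id_eq, innerSL_apply_apply,
      ContinuousLinearMap.coe_smul', Pi.smul_apply, smul_eq_mul]
    rw [map_smul, real_inner_smul_left, real_inner_comm (y - c)]
    ring
  have hcontF'x : ContinuousOn (F' x) (Set.Icc (0:ℝ) 1) := by
    have hzx : ContinuousOn (fun t => z x t) (Set.Icc (0:ℝ) 1) :=
      (hzcont.comp (continuous_id.prodMk continuous_const)).continuousOn
    have hmap : Set.MapsTo (fun t => z x t) (Set.Icc (0:ℝ) 1) U :=
      fun t ht => hzU x (mem_closedBall_self hε0.le) t ht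
    have h1 : ContinuousOn (fun t => fderiv ℝ F (z x t)) (Set.Icc (0:ℝ) 1) :=
      hfc.comp hzx hmap
    have h2 : ContinuousOn (fun t => F (z x t)) (Set.Icc (0:ℝ) 1) :=
      hF.continuousOn.comp hzx hmap
    apply ContinuousOn.add
    · exact (continuousOn_id.smul
        (((ContinuousLinearMap.compL ℝ E E ℝ (innerSL ℝ (x - c))).continuous).comp_continuousOn h1))
    · exact (innerSL ℝ (E := E)).continuous.comp_continuousOn h2
  have hcontG : ∀ y ∈ closedBall x ε,
      ContinuousOn (fun t => (⟪F (z y t), y - c⟫ : ℝ)) (Set.Icc (0:ℝ) 1) := by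
    intro y hy
    have hzy' : ContinuousOn (fun t => z y t) (Set.Icc (0:ℝ) 1) :=
      (hzcont.comp (continuous_id.prodMk continuous_const)).continuousOn
    have hmap : Set.MapsTo (fun t => z y t) (Set.Icc (0:ℝ) 1) U :=
      fun t ht => hzU y hy t ht
    exact (hF.continuousOn.comp hzy' hmap).inner continuousOn_const
  have key : HasFDerivAt (fun y => ∫ t in (0:ℝ)..1, ⟪F (z y t), y - c⟫)
      (∫ t in (0:ℝ)..1, F' x t) x := by
    apply intervalIntegral.hasFDerivAt_integral_of_dominated_of_fderiv_le
      (bound := fun _ => r * M₁ + M₂) (ball_mem_nhds x hε0)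
    · filter_upwards [closedBall_mem_nhds x hε0] with y hy
      exact ((hcontG y hy).mono hIsub).aestronglyMeasurable measurableSet_uIoc
    · exact ((hcontG x (mem_closedBall_self hε0.le)).mono
        (by rw [Set.uIcc_of_le zero_le_one])).intervalIntegrable
    · exact ((hcontF'x).mono hIsub).aestronglyMeasurable measurableSet_uIoc
    · refine Filter.Eventually.of_forall fun t => fun ht y hy => ?_
      have ht' : t ∈ Set.Icc (0:ℝ) 1 := hIsub ht
      have hy' : y ∈ closedBall x ε := ball_subset_closedBall hy
      have hzK : z y t ∈ K := hKmem y hy' t ht'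
      have hyc : ‖y - c‖ ≤ r := by
        have hyx : dist y x ≤ ε := mem_closedBall.mp hy'
        have := dist_triangle y x c
        rw [← dist_eq_norm]
        simp only [hεdef] at hyx ⊢
        linarith
      calc ‖F' y t‖ ≤ ‖t • ((innerSL ℝ (y - c)).comp (fderiv ℝ F (z y t)))‖
            + ‖innerSL ℝ (F (z y t))‖ := norm_add_le _ _
        _ ≤ |t| * (‖y - c‖ * ‖fderiv ℝ F (z y t)‖) + ‖F (z y t)‖ := by
            rw [norm_smul t ((innerSL ℝ (y - c)).comp (fderiv ℝ F (z y t))),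
              innerSL_apply_norm, Real.norm_eq_abs]
            gcongr
            calc ‖(innerSL ℝ (y - c)).comp (fderiv ℝ F (z y t))‖
                ≤ ‖innerSL ℝ (y - c)‖ * ‖fderiv ℝ F (z y t)‖ :=
                  ContinuousLinearMap.opNorm_comp_le _ _
              _ = ‖y - c‖ * ‖fderiv ℝ F (z y t)‖ := by rw [innerSL_apply_norm]
        _ ≤ 1 * (r * M₁) + M₂ := by
            have h1 : |t| ≤ 1 := by
              rw [abs_of_nonneg ht'.1]; exact ht'.2
            have h2 := hM₁ _ hzK
            have h3 := hM₂ _ hzK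
            have h4 : (0:ℝ) ≤ |t| := abs_nonneg t
            have h5 : 0 ≤ ‖y - c‖ := norm_nonneg _
            have h6 : 0 ≤ ‖fderiv ℝ F (z y t)‖ := norm_nonneg _
            have h7 : ‖y - c‖ * ‖fderiv ℝ F (z y t)‖ ≤ r * M₁ :=
              mul_le_mul hyc h2 h6 hr0
            have h8 : |t| * (‖y - c‖ * ‖fderiv ℝ F (z y t)‖) ≤ 1 * (r * M₁) :=
              mul_le_mul h1 h7 (by positivity) zero_le_one
            linarith
        _ = r * M₁ + M₂ := by ring
    · exact intervalIntegrable_const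
    · refine Filter.Eventually.of_forall fun t => fun ht y hy => ?_
      exact hdiff t (hIsub ht) y (ball_subset_closedBall hy)
  have hIntF'x : IntervalIntegrable (F' x) MeasureTheory.volume 0 1 :=
    (hcontF'x.mono (by rw [Set.uIcc_of_le zero_le_one])).intervalIntegrable
  have hval : (∫ t in (0:ℝ)..1, F' x t) = (InnerProductSpace.toDual ℝ E) (F x) := by
    ext v
    rw [ContinuousLinearMap.intervalIntegral_apply hIntF'x v]
    have hxε : x ∈ closedBall x ε := mem_closedBall_self hε0.le
    have hder : ∀ t ∈ Set.uIcc (0:ℝ) 1,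
        HasDerivAt (fun s => s * ⟪F (z x s), v⟫) ((F' x t) v) t := by
      intro t ht
      rw [Set.uIcc_of_le zero_le_one] at ht
      have hzUx : z x t ∈ U := hzU x hxε t ht
      have hFz : HasFDerivAt F (fderiv ℝ F (z x t)) (z x t) :=
        (hFd.differentiableAt (hU.mem_nhds hzUx)).hasFDerivAt
      have h1 : HasDerivAt (fun s => z x s) (x - c) t := by
        simpa [hzdef] using ((hasDerivAt_id t).smul_const (x - c)).const_add c
      have h2 : HasDerivAt (fun s => F (z x s)) (fderiv ℝ F (z x t) (x - c)) t :=
        hFz.comp_hasDerivAt t h1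
      have h3 : HasDerivAt (fun s => (⟪F (z x s), v⟫ : ℝ))
          ⟪fderiv ℝ F (z x t) (x - c), v⟫ t := by
        simpa using h2.inner ℝ (hasDerivAt_const t v)
      have h4 := (hasDerivAt_id t).mul h3
      have heq : (1 : ℝ) * ⟪F (z x t), v⟫ + t * ⟪fderiv ℝ F (z x t) (x - c), v⟫
          = (F' x t) v := by
        simp only [hF'def, ContinuousLinearMap.add_apply, ContinuousLinearMap.smul_apply,
          ContinuousLinearMap.comp_apply, innerSL_apply_apply, smul_eq_mul]
        rw [hsymm _ hzUx (x - c) v,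
          real_inner_comm ((fderiv ℝ F (z x t)) v) (x - c)]
        ring
      rw [← heq]
      simpa [Pi.mul_def] using h4
    have hint : IntervalIntegrable (fun t => (F' x t) v) MeasureTheory.volume 0 1 := by
      have : ContinuousOn (fun t => (F' x t) v) (Set.Icc (0:ℝ) 1) :=
        (ContinuousLinearMap.apply ℝ ℝ v).continuous.comp_continuousOn hcontF'x
      exact (this.mono (by rw [Set.uIcc_of_le zero_le_one])).intervalIntegrable
    rw [intervalIntegral.integral_eq_sub_of_hasDerivAt hder hint]
    simp [hzdef, InnerProductSpace.toDual_apply_apply]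
  rw [hasGradientAt_iff_hasFDerivAt]
  rw [← hval]
  exact key

/-- Existence of an adapted partition for a continuous curve in `U`. -/
theorem exists_adapted [ProperSpace E] {F : E → E} {U : Set E} (hU : IsOpen U)
    (hF : ContDiffOn ℝ 1 F U)
    (hsymm : ∀ x ∈ U, ∀ u v : E, ⟪fderiv ℝ F x u, v⟫ = ⟪fderiv ℝ F x v, u⟫)
    {g : ℝ → E} (hg : Continuous g) (hgU : ∀ t ∈ Set.Icc (0:ℝ) 1, g t ∈ U) :
    ∃ n ψ V, Adapted F g n ψ V := by
  classical
  set K : Set E := g '' Set.Icc 0 1 with hKdef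
  have hKcomp : IsCompact K := isCompact_Icc.image hg
  have hKU : K ⊆ U := by rintro _ ⟨t, ht, rfl⟩; exact hgU t ht
  obtain ⟨δ, hδ0, hδ⟩ := hKcomp.exists_cthickening_subset_open hU hKU
  have hballU : ∀ t ∈ Set.Icc (0:ℝ) 1, ball (g t) δ ⊆ U := by
    intro t ht y hy
    exact hδ (Metric.mem_cthickening_of_dist_le y (g t) δ K ⟨t, ht, rfl⟩
      (le_of_lt (mem_ball.mp hy)))
  have hgu := Metric.uniformContinuousOn_iff.mp
    ((isCompact_Icc (a := (0:ℝ)) (b := 1)).uniformContinuousOn_of_continuous hg.continuousOn)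
  obtain ⟨η, hη0, hη⟩ := hgu δ hδ0
  obtain ⟨n0, hn0⟩ := exists_nat_one_div_lt hη0
  set N : ℕ := n0 + 1 with hNdef
  have hN0 : 0 < N := Nat.succ_pos n0
  have hN0' : (0:ℝ) < N := by exact_mod_cast hN0
  set V : ℕ → Set E := fun i => ball (g ((i:ℝ)/N)) δ with hVdef
  set ψ : ℕ → E → ℝ := fun i =>
    if h : ∃ p : E → ℝ, ∀ x ∈ V i, HasGradientAt p (F x) x then h.choose else 0 with hψdef
  refine ⟨N, ψ, V, hN0, fun i hi => ?_⟩
  have hiN : ((i:ℝ)+1)/N ≤ 1 := by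
    rw [div_le_one hN0']
    exact_mod_cast Nat.succ_le_of_lt hi
  have hi0 : (0:ℝ) ≤ (i:ℝ)/N := by positivity
  have hiIcc : (i:ℝ)/N ∈ Set.Icc (0:ℝ) 1 := by
    constructor
    · exact hi0
    · refine le_trans ?_ hiN
      gcongr
      · linarith
  have hsubU : V i ⊆ U := hballU _ hiIcc
  have hmem : ∀ t ∈ Set.Icc ((i:ℝ)/N) (((i:ℝ)+1)/N), g t ∈ V i := by
    intro t ht
    have htIcc : t ∈ Set.Icc (0:ℝ) 1 := ⟨le_trans hi0 ht.1, le_trans ht.2 hiN⟩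
    have hdist : dist t ((i:ℝ)/N) < η := by
      rw [Real.dist_eq, abs_of_nonneg (by linarith [ht.1])]
      have : t - (i:ℝ)/N ≤ 1/N := by
        have : ((i:ℝ)+1)/N - (i:ℝ)/N = 1/N := by field_simp; ring
        linarith [ht.2]
      calc t - (i:ℝ)/N ≤ 1/N := this
        _ ≤ 1/(n0+1) := by
          rw [hNdef]
          push_cast
          norm_num
        _ < η := hn0
    exact mem_ball.mpr (hη t htIcc ((i:ℝ)/N) hiIcc hdist)
  have hpot : ∃ p : E → ℝ, ∀ x ∈ V i, HasGradientAt p (F x) x :=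
    exists_potential_ball hU hF hsymm hsubU
  refine ⟨convex_ball _ _, ?_, hmem⟩
  simp only [hψdef]
  rw [dif_pos hpot]
  exact hpot.choose_spec

open unitInterval in
/-- Homotopy invariance of `pint`. -/
theorem pint_homotopy_invariant [ProperSpace E] {F : E → E} {U : Set E} (hU : IsOpen U)
    (hF : ContDiffOn ℝ 1 F U)
    (hsymm : ∀ x ∈ U, ∀ u v : E, ⟪fderiv ℝ F x u, v⟫ = ⟪fderiv ℝ F x v, u⟫)
    {a b : E} (ha : a ∈ U) (hb : b ∈ U) {p q : Path (⟨a, ha⟩ : U) ⟨b, hb⟩}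
    (H : Path.Homotopy p q) :
    pint F (fun t => ((p.extend t : U) : E)) = pint F (fun t => ((q.extend t : U) : E)) := by
  classical
  set pr : ℝ → I := Set.projIcc 0 1 zero_le_one with hprdef
  set G : ℝ → ℝ → E := fun s t => ((H (pr s, pr t) : U) : E) with hGdef
  have hGcont : Continuous fun z : ℝ × ℝ => G z.1 z.2 := by
    apply continuous_subtype_val.comp
    exact H.continuous.comp ((continuous_projIcc.comp continuous_fst).prodMk
      (continuous_projIcc.comp continuous_snd))
  have hGU : ∀ s t : ℝ, G s t ∈ U := fun s t => (H (pr s, pr t)).2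
  have hGa : ∀ s : ℝ, G s 0 = a := by
    intro s
    simp only [hGdef, hprdef, Set.projIcc_left]
    rw [show ((⟨0, _⟩ : Set.Icc (0:ℝ) 1)) = (0 : I) from rfl]
    rw [H.source (pr s)]
  have hGb : ∀ s : ℝ, G s 1 = b := by
    intro s
    simp only [hGdef, hprdef, Set.projIcc_right]
    rw [show ((⟨1, _⟩ : Set.Icc (0:ℝ) 1)) = (1 : I) from rfl]
    rw [H.target (pr s)]
  have hG0 : G 0 = fun t => ((p.extend t : U) : E) := by
    funext t
    simp only [hGdef, hprdef, Set.projIcc_left]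
    rw [show ((⟨0, _⟩ : Set.Icc (0:ℝ) 1)) = (0 : I) from rfl]
    have : H ((0 : I), pr t) = p (pr t) := H.apply_zero (pr t)
    rw [this]
    rfl
  have hG1 : G 1 = fun t => ((q.extend t : U) : E) := by
    funext t
    simp only [hGdef, hprdef, Set.projIcc_right]
    rw [show ((⟨1, _⟩ : Set.Icc (0:ℝ) 1)) = (1 : I) from rfl]
    have : H ((1 : I), pr t) = q (pr t) := H.apply_one (pr t)
    rw [this]
    rfl
  -- compactness and uniform continuity setup
  set T : Set (ℝ × ℝ) := Set.Icc (0:ℝ) 1 ×ˢ Set.Icc (0:ℝ) 1 with hTdef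
  have hTcomp : IsCompact T := isCompact_Icc.prod isCompact_Icc
  set K : Set E := (fun z : ℝ × ℝ => G z.1 z.2) '' T with hKdef
  have hKcomp : IsCompact K := hTcomp.image hGcont
  have hKU : K ⊆ U := by rintro _ ⟨z, _, rfl⟩; exact hGU z.1 z.2
  obtain ⟨δ, hδ0, hδ⟩ := hKcomp.exists_cthickening_subset_open hU hKU
  have hballU : ∀ z ∈ T, ball (G z.1 z.2) δ ⊆ U := by
    intro z hz y hy
    exact hδ (Metric.mem_cthickening_of_dist_le y (G z.1 z.2) δ K ⟨z, hz, rfl⟩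
      (le_of_lt (mem_ball.mp hy)))
  have hgu := Metric.uniformContinuousOn_iff.mp
    (hTcomp.uniformContinuousOn_of_continuous hGcont.continuousOn)
  obtain ⟨η, hη0, hη⟩ := hgu δ hδ0
  obtain ⟨n0, hn0⟩ := exists_nat_one_div_lt hη0
  set N : ℕ := n0 + 1 with hNdef
  have hN0 : 0 < N := Nat.succ_pos n0
  have hN0' : (0:ℝ) < N := by exact_mod_cast hN0
  have h1N : 1/(N:ℝ) < η := by
    refine lt_of_le_of_lt ?_ hn0
    rw [hNdef]; push_cast; norm_num
  set f : ℝ → ℝ := fun s => pint F (G s) with hfdef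
  -- key local constancy claim
  have key : ∀ s₀ ∈ Set.Icc (0:ℝ) 1, ∀ s ∈ Set.Icc (0:ℝ) 1, |s - s₀| < η → f s = f s₀ := by
    intro s₀ hs₀ s hs hss
    set V : ℕ → Set E := fun i => ball (G s₀ ((i:ℝ)/N)) δ with hVdef
    set ψ : ℕ → E → ℝ := fun i =>
      if h : ∃ pp : E → ℝ, ∀ x ∈ V i, HasGradientAt pp (F x) x then h.choose else 0 with hψdef
    have hiIcc : ∀ i : ℕ, i < N → ((i:ℝ)/N) ∈ Set.Icc (0:ℝ) 1 := by
      intro i hi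
      constructor
      · positivity
      · rw [div_le_one hN0']
        exact_mod_cast hi.le
    have hAd : ∀ s' ∈ Set.Icc (0:ℝ) 1, |s' - s₀| < η → Adapted F (G s') N ψ V := by
      intro s' hs' hss'
      refine ⟨hN0, fun i hi => ?_⟩
      have hiI := hiIcc i hi
      have hiN : ((i:ℝ)+1)/N ≤ 1 := by
        rw [div_le_one hN0']
        exact_mod_cast Nat.succ_le_of_lt hi
      have hsubU : V i ⊆ U := hballU ((s₀ : ℝ), ((i:ℝ)/N)) ⟨hs₀, hiI⟩
      have hmem : ∀ t ∈ Set.Icc ((i:ℝ)/N) (((i:ℝ)+1)/N), G s' t ∈ V i := by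
        intro t ht
        have ht0 : (0:ℝ) ≤ (i:ℝ)/N := hiI.1
        have htIcc : t ∈ Set.Icc (0:ℝ) 1 := ⟨le_trans ht0 ht.1, le_trans ht.2 hiN⟩
        have hdt : dist ((s', t) : ℝ × ℝ) ((s₀, (i:ℝ)/N)) < η := by
          rw [Prod.dist_eq]
          apply max_lt
          · rw [Real.dist_eq]; exact hss'
          · rw [Real.dist_eq, abs_of_nonneg (by linarith [ht.1])]
            have hgap : ((i:ℝ)+1)/N - (i:ℝ)/N = 1/N := by field_simp; ring
            linarith [ht.2]
        exact mem_ball.mpr (hη ((s', t)) ⟨hs', htIcc⟩ ((s₀, (i:ℝ)/N)) ⟨hs₀, hiI⟩ hdt)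
      have hpot : ∃ pp : E → ℝ, ∀ x ∈ V i, HasGradientAt pp (F x) x :=
        exists_potential_ball hU hF hsymm hsubU
      refine ⟨convex_ball _ _, ?_, hmem⟩
      simp only [hψdef]
      rw [dif_pos hpot]
      exact hpot.choose_spec
    have hA0 : Adapted F (G s₀) N ψ V := hAd s₀ hs₀ (by simp [hη0])
    have hAs : Adapted F (G s) N ψ V := hAd s hs hss
    rw [hfdef]
    simp only
    rw [pint_eq hAs, pint_eq hA0]
    -- telescoping argument
    have hNN : ((N:ℝ))/N = 1 := div_self (ne_of_gt hN0')
    set D : ℕ → ℝ → ℝ := fun i t => ψ i (G s t) - ψ i (G s₀ t) with hDdef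
    set u : ℕ → ℝ := fun i => D (min i (N-1)) ((i:ℝ)/N) with hudef
    have hterm : ∀ i ∈ Finset.range N,
        (ψ i (G s (((i:ℝ)+1)/N)) - ψ i (G s ((i:ℝ)/N)))
          - (ψ i (G s₀ (((i:ℝ)+1)/N)) - ψ i (G s₀ ((i:ℝ)/N)))
        = u (i+1) - u i := by
      intro i hi
      have hi' := Finset.mem_range.mp hi
      have hui : u i = D i ((i:ℝ)/N) := by
        simp only [hudef]
        rw [min_eq_left (by omega)]
      have hcast : (((i+1:ℕ)):ℝ) = (i:ℝ)+1 := by push_cast; ring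
      have hui1 : u (i+1) = D i (((i:ℝ)+1)/N) := by
        rcases eq_or_lt_of_le (Nat.succ_le_of_lt hi') with heq | hlt
        · simp only [hudef]
          rw [min_eq_right (by omega), hcast]
          congr 1
          omega
        · simp only [hudef]
          rw [min_eq_left (by omega), hcast]
          have hmem1 : G s (((i:ℝ)+1)/N) ∈ V i ∩ V (i+1) := by
            refine ⟨hAs.mem_right hi', ?_⟩
            have := hAs.mem_left hlt
            rwa [hcast] at this
          have hmem0 : G s₀ (((i:ℝ)+1)/N) ∈ V i ∩ V (i+1) := by
            refine ⟨hA0.mem_right hi', ?_⟩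
            have := hA0.mem_left hlt
            rwa [hcast] at this
          have hpd := pot_diff_eq (((hAs.2 (i+1) hlt).1).inter ((hAs.2 i hi').1))
            (fun x hx => (hAs.2 (i+1) hlt).2.1 x hx.1)
            (fun x hx => (hAs.2 i hi').2.1 x hx.2)
            (x := G s (((i:ℝ)+1)/N)) (y := G s₀ (((i:ℝ)+1)/N))
            ⟨hmem1.2, hmem1.1⟩ ⟨hmem0.2, hmem0.1⟩
          simp only [hDdef]
          linarith [hpd]
      rw [hui, hui1]
      simp only [hDdef]
      ring
    have hsum : psum (G s) N ψ - psum (G s₀) N ψ = u N - u 0 := by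
      rw [psum, psum, ← Finset.sum_sub_distrib]
      rw [Finset.sum_congr rfl hterm]
      exact Finset.sum_range_sub u N
    have huN : u N = 0 := by
      simp only [hudef, hDdef]
      rw [hNN, hGb s, hGb s₀]
      ring
    have hu0 : u 0 = 0 := by
      simp only [hudef, hDdef]
      rw [Nat.cast_zero, zero_div, hGa s, hGa s₀]
      ring
    linarith [hsum]
  -- conclude by local constancy on the connected interval
  have hconst : f 1 = f 0 := by
    set fI : (Set.Icc (0:ℝ) 1) → ℝ := fun s => f s with hfIdef
    have hLC : IsLocallyConstant fI := by
      rw [IsLocallyConstant.iff_eventually_eq]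
      intro x
      have h1 : ∀ᶠ y' in nhds (x:ℝ), y' ∈ ball (x:ℝ) η := Metric.ball_mem_nhds (x:ℝ) hη0
      have h2 := (continuous_subtype_val.tendsto x).eventually h1
      filter_upwards [h2] with y hy
      exact key x x.2 y y.2 (by rw [← Real.dist_eq]; exact mem_ball.mp hy)
    haveI : PreconnectedSpace (Set.Icc (0:ℝ) 1) :=
      Subtype.preconnectedSpace isPreconnected_Icc
    exact hLC.apply_eq_of_preconnectedSpace ⟨1, by norm_num⟩ ⟨0, by norm_num⟩
  rw [← hG0, ← hG1]
  exact hconst.symm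

theorem trans_extend_left {X : Type*} [TopologicalSpace X] {a b c : X}
    (γ : Path a b) (σ : Path b c) {t : ℝ} (h0 : 0 ≤ t) (h2 : t ≤ 1/2) :
    (γ.trans σ).extend t = γ.extend (2*t) := by
  have ht1 : t ≤ 1 := by linarith
  rw [Path.extend_apply _ ⟨h0, ht1⟩, Path.trans_apply,
    Path.extend_apply _ ⟨by linarith, by linarith⟩]
  rw [dif_pos h2]

theorem trans_extend_right {X : Type*} [TopologicalSpace X] {a b c : X}
    (γ : Path a b) (σ : Path b c) {t : ℝ} (h2 : 1/2 ≤ t) (h1 : t ≤ 1) :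
    (γ.trans σ).extend t = σ.extend (2*t - 1) := by
  have ht0 : 0 ≤ t := by linarith
  rw [Path.extend_apply _ ⟨ht0, h1⟩, Path.trans_apply,
    Path.extend_apply _ ⟨by linarith, by linarith⟩]
  by_cases hc : t ≤ 1/2
  · have ht : t = 1/2 := le_antisymm hc h2
    rw [dif_pos hc]
    have e1 : (⟨2*t, by constructor <;> [linarith; linarith]⟩ : unitInterval) = 1 := by
      apply Subtype.ext
      simp [ht]
    have e2 : (⟨2*t - 1, by constructor <;> [linarith; linarith]⟩ : unitInterval) = 0 := by
      apply Subtype.ext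
      simp [ht]
    rw [show (⟨2*↑(⟨t, ht0, h1⟩ : unitInterval), _⟩ : unitInterval)
        = (⟨2*t, by constructor <;> [linarith; linarith]⟩ : unitInterval) from rfl, e1, e2]
    simp
  · rw [dif_neg hc]

/-- `pint` of a concatenation with a path staying in a single convex potential region. -/
theorem pint_trans_seg {F : E → E} {a b x : E} (γ : Path a b) (σ : Path b x)
    {n : ℕ} {ψ : ℕ → E → ℝ} {V : ℕ → Set E} (hA : Adapted F γ.extend n ψ V)
    {W : Set E} (hW : Convex ℝ W) {χ : E → ℝ} (hχ : ∀ y ∈ W, HasGradientAt χ (F y) y)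
    (hσW : ∀ t : ℝ, σ.extend t ∈ W) :
    pint F (γ.trans σ).extend = pint F γ.extend + (χ x - χ b) := by
  classical
  have hn := hA.1
  have hAd := hA.2
  have hn' : (0:ℝ) < n := by exact_mod_cast hn
  set TE : ℝ → E := ⇑(γ.trans σ).extend with hTEdef
  set Ψ : ℕ → E → ℝ := fun j => if j < n then ψ j else χ with hΨdef
  set VV : ℕ → Set E := fun j => if j < n then V j else W with hVVdef
  have hcast2n : (((2*n : ℕ)):ℝ) = 2*(n:ℝ) := by push_cast; ring
  have hAA : Adapted F TE (2*n) Ψ VV := by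
    refine ⟨by omega, fun j hj => ?_⟩
    by_cases hjn : j < n
    · simp only [hΨdef, hVVdef, if_pos hjn]
      obtain ⟨hc, hp, hmem⟩ := hAd j hjn
      refine ⟨hc, hp, fun t ht => ?_⟩
      rw [hcast2n] at ht
      have hj1 : ((j:ℝ)+1) ≤ n := by exact_mod_cast Nat.succ_le_of_lt hjn
      have ht0 : 0 ≤ t := le_trans (by positivity) ht.1
      have ht2 : t ≤ 1/2 := by
        refine le_trans ht.2 ?_
        rw [div_le_div_iff₀ (by positivity) (by norm_num)]
        linarith
      rw [hTEdef, trans_extend_left γ σ ht0 ht2]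
      have e1 : (j:ℝ)/n = 2*((j:ℝ)/(2*n)) := by field_simp
      have e2 : ((j:ℝ)+1)/n = 2*(((j:ℝ)+1)/(2*n)) := by field_simp
      refine hmem (2*t) ⟨?_, ?_⟩
      · rw [e1]; linarith [ht.1]
      · rw [e2]; linarith [ht.2]
    · simp only [hΨdef, hVVdef, if_neg hjn]
      refine ⟨hW, hχ, fun t ht => ?_⟩
      rw [hcast2n] at ht
      have hjn' : (n:ℝ) ≤ (j:ℝ) := by exact_mod_cast Nat.le_of_not_lt hjn
      have hj2n : ((j:ℝ)+1) ≤ 2*n := by exact_mod_cast Nat.succ_le_of_lt hj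
      have ht2 : 1/2 ≤ t := by
        refine le_trans ?_ ht.1
        rw [div_le_div_iff₀ (by norm_num) (by positivity)]
        linarith
      have ht1 : t ≤ 1 := by
        refine le_trans ht.2 ?_
        rw [div_le_one (by positivity)]
        linarith
      rw [hTEdef, trans_extend_right γ σ ht2 ht1]
      exact hσW _
  rw [pint_eq hAA, pint_eq hA]
  have h2n : 2*n = n + n := by omega
  have hcastnn : (((n+n : ℕ)):ℝ) = (n:ℝ)+(n:ℝ) := by push_cast; ring
  rw [psum, psum, h2n]
  rw [Finset.sum_range_add (fun j =>
    Ψ j (TE (((j:ℝ)+1)/(((n+n : ℕ)):ℝ))) - Ψ j (TE ((j:ℝ)/(((n+n : ℕ)):ℝ)))) n n]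
  congr 1
  · refine Finset.sum_congr rfl fun j hj => ?_
    have hjn := Finset.mem_range.mp hj
    have hj1 : ((j:ℝ)+1) ≤ n := by exact_mod_cast Nat.succ_le_of_lt hjn
    have hj0 : (0:ℝ) ≤ (j:ℝ) := by positivity
    have hE1 : TE (((j:ℝ)+1)/(((n+n : ℕ)):ℝ)) = γ.extend (((j:ℝ)+1)/n) := by
      rw [hcastnn, hTEdef, trans_extend_left γ σ (by positivity)
        (by rw [div_le_div_iff₀ (by linarith) (by norm_num)]; linarith)]
      congr 1
      field_simp
      ring
    have hE0 : TE ((j:ℝ)/(((n+n : ℕ)):ℝ)) = γ.extend ((j:ℝ)/n) := by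
      rw [hcastnn, hTEdef, trans_extend_left γ σ (by positivity)
        (by rw [div_le_div_iff₀ (by linarith) (by norm_num)]; linarith)]
      congr 1
      field_simp
      ring
    rw [hE1, hE0]
    simp only [hΨdef, if_pos hjn]
  · have hterm : ∀ j ∈ Finset.range n,
        Ψ (n+j) (TE (((((n+j : ℕ)):ℝ)+1)/(((n+n : ℕ)):ℝ)))
          - Ψ (n+j) (TE ((((n+j : ℕ)):ℝ)/(((n+n : ℕ)):ℝ)))
        = (fun k : ℕ => χ (σ.extend ((k:ℝ)/n))) (j+1) - (fun k : ℕ => χ (σ.extend ((k:ℝ)/n))) j := by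
      intro j hj
      have hjn := Finset.mem_range.mp hj
      have hj1 : ((j:ℝ)+1) ≤ n := by exact_mod_cast Nat.succ_le_of_lt hjn
      have hj0 : (0:ℝ) ≤ (j:ℝ) := by positivity
      have hcnj : (((n+j : ℕ)):ℝ) = (n:ℝ)+(j:ℝ) := by push_cast; ring
      have hE1 : TE (((((n+j : ℕ)):ℝ)+1)/(((n+n : ℕ)):ℝ)) = σ.extend (((j:ℝ)+1)/n) := by
        rw [hcastnn, hcnj, hTEdef, trans_extend_right γ σ
          (by rw [div_le_div_iff₀ (by norm_num) (by linarith)]; linarith)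
          (by rw [div_le_one (by linarith)]; linarith)]
        congr 1
        field_simp
        ring
      have hE0 : TE ((((n+j : ℕ)):ℝ)/(((n+n : ℕ)):ℝ)) = σ.extend ((j:ℝ)/n) := by
        rw [hcastnn, hcnj, hTEdef, trans_extend_right γ σ
          (by rw [div_le_div_iff₀ (by norm_num) (by linarith)]; linarith)
          (by rw [div_le_one (by linarith)]; linarith)]
        congr 1
        field_simp
        ring
      have hΨnj : Ψ (n+j) = χ := by
        simp only [hΨdef, if_neg (by omega : ¬ (n+j < n))]
      rw [hE1, hE0, hΨnj]
      push_cast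
      ring_nf
    rw [Finset.sum_congr rfl hterm, Finset.sum_range_sub (fun k : ℕ => χ (σ.extend ((k:ℝ)/n)))]
    rw [div_self (ne_of_gt hn'), Nat.cast_zero, zero_div, Path.extend_one, Path.extend_zero]

/-- Path independence of `pint` on a simply connected open set. -/
theorem pint_indep [ProperSpace E] {F : E → E} {U : Set E} (hU : IsOpen U)
    (hSC : SimplyConnectedSpace U) (hF : ContDiffOn ℝ 1 F U)
    (hsymm : ∀ x ∈ U, ∀ u v : E, ⟪fderiv ℝ F x u, v⟫ = ⟪fderiv ℝ F x v, u⟫)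
    {a b : E} (ha : a ∈ U) (hb : b ∈ U) (p q : Path a b)
    (hp : ∀ t, p t ∈ U) (hq : ∀ t, q t ∈ U) :
    pint F p.extend = pint F q.extend := by
  haveI := hSC
  set pU : Path (⟨a, ha⟩ : U) ⟨b, hb⟩ :=
    { toFun := fun t => ⟨p t, hp t⟩
      continuous_toFun := p.continuous.subtype_mk _
      source' := Subtype.ext p.source
      target' := Subtype.ext p.target } with hpUdef
  set qU : Path (⟨a, ha⟩ : U) ⟨b, hb⟩ :=
    { toFun := fun t => ⟨q t, hq t⟩
      continuous_toFun := q.continuous.subtype_mk _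
      source' := Subtype.ext q.source
      target' := Subtype.ext q.target } with hqUdef
  have hhom : Path.Homotopic pU qU := SimplyConnectedSpace.paths_homotopic pU qU
  have key := pint_homotopy_invariant hU hF hsymm ha hb hhom.some
  have e1 : (fun t => ((pU.extend t : U) : E)) = p.extend := rfl
  have e2 : (fun t => ((qU.extend t : U) : E)) = q.extend := rfl
  rwa [e1, e2] at key

/-- The straight segment path. -/
def segPath (a b : E) : Path a b where
  toFun t := a + (t:ℝ) • (b - a)
  continuous_toFun := by
    exact continuous_const.add ((continuous_subtype_val).smul continuous_const)
  source' := by simp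
  target' := by simp

theorem segPath_extend_mem_ball {x₁ x : E} {δ : ℝ} (hδ : 0 < δ) (hx : x ∈ ball x₁ δ) :
    ∀ t : ℝ, (segPath x₁ x).extend t ∈ ball x₁ δ := by
  intro t
  have heq : (segPath x₁ x).extend t
      = x₁ + ((Set.projIcc 0 1 zero_le_one t : unitInterval) : ℝ) • (x - x₁) := rfl
  rw [heq, mem_ball, dist_eq_norm]
  simp only [add_sub_cancel_left]
  set u : ℝ := ((Set.projIcc 0 1 zero_le_one t : unitInterval) : ℝ) with hudef
  have hu0 : 0 ≤ u := (Set.projIcc 0 1 zero_le_one t).2.1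
  have hu1 : u ≤ 1 := (Set.projIcc 0 1 zero_le_one t).2.2
  rw [norm_smul, Real.norm_eq_abs, abs_of_nonneg hu0]
  have hxd : ‖x - x₁‖ < δ := by rw [← dist_eq_norm]; exact mem_ball.mp hx
  nlinarith [norm_nonneg (x - x₁)]

end PoincareAux

/-- On an open simply connected set `U`, a `C¹` vector field `F` with symmetric Jacobian
admits a potential `φ` with `∇φ = F` on `U`, unique up to an additive constant. -/
theorem stmt_2 {d : ℕ} (U : Set (EuclideanSpace ℝ (Fin d))) (hU : IsOpen U)
    (hpc : IsPathConnected U) (hSC : SimplyConnectedSpace U)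
    (F : EuclideanSpace ℝ (Fin d) → EuclideanSpace ℝ (Fin d))
    (hF : ContDiffOn ℝ 1 F U)
    (hsymm : ∀ x ∈ U, ∀ u v : EuclideanSpace ℝ (Fin d),
      ⟪fderiv ℝ F x u, v⟫ = ⟪fderiv ℝ F x v, u⟫) :
    (∃ φ : EuclideanSpace ℝ (Fin d) → ℝ, ∀ x ∈ U, HasGradientAt φ (F x) x) ∧
    (∀ φ₁ φ₂ : EuclideanSpace ℝ (Fin d) → ℝ,
      (∀ x ∈ U, HasGradientAt φ₁ (F x) x) → (∀ x ∈ U, HasGradientAt φ₂ (F x) x) →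
      ∃ c : ℝ, ∀ x ∈ U, φ₁ x = φ₂ x + c) := by
  classical
  obtain ⟨x₀, hx₀U, hjoin⟩ := hpc
  constructor
  · -- existence
    set φ : EuclideanSpace ℝ (Fin d) → ℝ := fun x =>
      if h : x ∈ U then pint F ((hjoin h).somePath.extend) else 0 with hφdef
    refine ⟨φ, fun x₁ hx₁ => ?_⟩
    obtain ⟨δ, hδ0, hδU⟩ := Metric.isOpen_iff.mp hU x₁ hx₁
    obtain ⟨ψB, hψB⟩ := exists_potential_ball hU hF hsymm hδU
    set γ₁ : Path x₀ x₁ := (hjoin hx₁).somePath with hγ₁def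
    have hγ₁mem : ∀ t, γ₁ t ∈ U := (hjoin hx₁).somePath_mem
    have hγ₁ext : ∀ t ∈ Set.Icc (0:ℝ) 1, γ₁.extend t ∈ U := by
      intro t ht
      rw [Path.extend_apply _ ht]
      exact hγ₁mem _
    obtain ⟨n, ψ, V, hAd⟩ := exists_adapted hU hF hsymm γ₁.continuous_extend hγ₁ext
    have hφx₁ : φ x₁ = pint F γ₁.extend := by
      rw [hφdef]
      simp only
      rw [dif_pos hx₁]
    have hloc : ∀ x ∈ ball x₁ δ, φ x = ψB x + (φ x₁ - ψB x₁) := by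
      intro x hx
      have hxU : x ∈ U := hδU hx
      set σ : Path x₁ x := segPath x₁ x with hσdef
      have hσball : ∀ t : ℝ, σ.extend t ∈ ball x₁ δ := segPath_extend_mem_ball hδ0 hx
      set τ : Path x₀ x := γ₁.trans σ with hτdef
      have hτmem : ∀ t, τ t ∈ U := by
        intro t
        rw [hτdef, Path.trans_apply]
        split_ifs
        · exact hγ₁mem _
        · exact hδU (by
            have : σ.extend ((2*(t:ℝ) - 1)) ∈ ball x₁ δ := hσball _
            rwa [Path.extend_apply _ ⟨by
              have := (not_le.mp (by assumption)).le
              linarith, by linarith [t.2.2]⟩] at this)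
      have h1 : φ x = pint F τ.extend := by
        rw [hφdef]
        simp only
        rw [dif_pos hxU]
        exact pint_indep hU hSC hF hsymm hx₀U hxU _ τ ((hjoin hxU).somePath_mem) hτmem
      have h2 : pint F τ.extend = pint F γ₁.extend + (ψB x - ψB x₁) :=
        pint_trans_seg γ₁ σ hAd (convex_ball x₁ δ)
          (fun y hy => hψB y hy) (fun t => hσball t)
      rw [h1, h2, hφx₁]
      ring
    have hc : HasFDerivAt (fun y => ψB y + (φ x₁ - ψB x₁))
        ((InnerProductSpace.toDual ℝ _) (F x₁)) x₁ :=
      ((hψB x₁ (mem_ball_self hδ0)).hasFDerivAt).add_const _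
    have hev : φ =ᶠ[nhds x₁] (fun y => ψB y + (φ x₁ - ψB x₁)) := by
      filter_upwards [ball_mem_nhds x₁ hδ0] with y hy
      exact hloc y hy
    rw [hasGradientAt_iff_hasFDerivAt]
    exact hc.congr_of_eventuallyEq hev
  · -- uniqueness
    intro φ₁ φ₂ h₁ h₂
    refine ⟨φ₁ x₀ - φ₂ x₀, fun x hx => ?_⟩
    set γ : Path x₀ x := (hjoin hx).somePath with hγdef
    have hγmem : ∀ t, γ t ∈ U := (hjoin hx).somePath_mem
    set f : ℝ → ℝ := fun t => φ₁ (γ.extend t) - φ₂ (γ.extend t) with hfdef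
    have hLC : IsLocallyConstant f := by
      rw [IsLocallyConstant.iff_eventually_eq]
      intro t₀
      set z := γ.extend t₀ with hzdef
      have hzU : z ∈ U := by
        rw [hzdef]
        rcases le_or_gt t₀ 0 with h | h
        · rw [Path.extend_of_le_zero _ h]; exact γ.source ▸ hγmem 0
        rcases le_or_gt 1 t₀ with h' | h'
        · rw [Path.extend_of_one_le _ h']; exact γ.target ▸ hγmem 1
        · rw [Path.extend_apply _ ⟨h.le, h'.le⟩]; exact hγmem _
      obtain ⟨δ, hδ0, hδU⟩ := Metric.isOpen_iff.mp hU z hzU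
      have hcont := (γ.continuous_extend.tendsto t₀).eventually
        (Metric.ball_mem_nhds z hδ0 : ball z δ ∈ nhds (γ.extend t₀))
      filter_upwards [hcont] with t ht
      have := pot_diff_eq (convex_ball z δ)
        (fun y hy => h₁ y (hδU hy)) (fun y hy => h₂ y (hδU hy))
        (x := γ.extend t) (y := z) ht (mem_ball_self hδ0)
      simp only [hfdef]
      linarith [this]
    have := hLC.apply_eq_of_preconnectedSpace 1 0
    simp only [hfdef, Path.extend_one, Path.extend_zero] at this
    linarith [this]
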